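/- Let ℓ and ℓ' be nonnegative integers with ℓ + ℓ' ≥ 1. Then the (ℓ+ℓ')-tuple ( 1/(ℓ+1), 2/(ℓ+1), ..., ℓ/(ℓ+1), 1/(ℓ'+1), 2/(ℓ'+1), ..., ℓ'/(ℓ'+1) ) belongs to (1/(ℓ+ℓ'+1)) · 𝒜_{ℓ+ℓ'}; equivalently, (ℓ+ℓ'+1) times this tuple lies in the convex hull of the permutations of (1, 2, ..., ℓ+ℓ'). -/

import Mathlib

/-- `𝒜_r`: the convex hull in ℝ^r of the set of all permutations of the vector (1, 2, ..., r). -/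
def permsHull (r : ℕ) : Set (Fin r → ℝ) :=
  convexHull ℝ {v : Fin r → ℝ | ∃ σ : Equiv.Perm (Fin r), v = fun i => ((σ i : ℕ) : ℝ) + 1}

/-- The set of vertices (permutations of (1, ..., r)). -/
def pverts (r : ℕ) : Set (Fin r → ℝ) :=
  {v : Fin r → ℝ | ∃ σ : Equiv.Perm (Fin r), v = fun i => ((σ i : ℕ) : ℝ) + 1}

lemma permsHull_eq (r : ℕ) : permsHull r = convexHull ℝ (pverts r) := rfl

/-- The value of the target vector at (0-indexed) position `v`. -/
noncomputable def tgtval (l l' v : ℕ) : ℝ :=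
  ((l : ℝ) + (l' : ℝ) + 1) *
    (if v < l then ((v : ℕ) + 1 : ℝ) / ((l : ℝ) + 1)
     else ((v - l + 1 : ℕ) : ℝ) / ((l' : ℝ) + 1))

/-- The target vector, as a vector in ℝ^n. -/
noncomputable def tgt (l l' n : ℕ) : Fin n → ℝ := fun i => tgtval l l' (i : ℕ)

lemma tgtval_lt {l v : ℕ} (l' : ℕ) (h : v < l) :
    tgtval l l' v = ((l : ℝ) + (l' : ℝ) + 1) * (((v:ℝ) + 1) / ((l : ℝ) + 1)) := by
  rw [tgtval, if_pos h]

lemma tgtval_ge {l v : ℕ} (l' : ℕ) (h : l ≤ v) :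
    tgtval l l' v = ((l : ℝ) + (l' : ℝ) + 1) * (((v:ℝ) - (l:ℝ) + 1) / ((l' : ℝ) + 1)) := by
  rw [tgtval, if_neg (Nat.not_lt.mpr h), Nat.cast_add, Nat.cast_sub h, Nat.cast_one]

/-- Insert the value `x` at position `p`, shifting the remaining coordinates. -/
def ins {m : ℕ} (p : Fin (m+1)) (x : ℝ) (w : Fin m → ℝ) : Fin (m+1) → ℝ :=
  fun j => if h : (j:ℕ) < (p:ℕ) then w ⟨j, by have := p.isLt; omega⟩
    else if h2 : (j:ℕ) = (p:ℕ) then x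
    else w ⟨(j:ℕ)-1, by have := j.isLt; omega⟩

lemma ins_apply_eq {m : ℕ} {p : Fin (m+1)} (x : ℝ) (w : Fin m → ℝ) {i : Fin (m+1)}
    (h : (i:ℕ) = (p:ℕ)) : ins p x w i = x := by
  simp [ins, h]

lemma ins_apply_same {m : ℕ} (p : Fin (m+1)) (x : ℝ) (w : Fin m → ℝ) :
    ins p x w p = x := by
  simp [ins]

lemma ins_tgt_lt (l l' : ℕ) {m : ℕ} {p : Fin (m+1)} (x : ℝ) {i : Fin (m+1)}
    (h : (i:ℕ) < (p:ℕ)) : ins p x (tgt l l' m) i = tgtval l l' (i:ℕ) := by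
  simp only [ins, dif_pos h]; rfl

lemma ins_tgt_gt (l l' : ℕ) {m : ℕ} {p : Fin (m+1)} (x : ℝ) {i : Fin (m+1)}
    (h : (p:ℕ) < (i:ℕ)) : ins p x (tgt l l' m) i = tgtval l l' ((i:ℕ) - 1) := by
  rw [ins, dif_neg (by omega), dif_neg (by omega)]; rfl

lemma ins_succAbove {m : ℕ} (p : Fin (m+1)) (x : ℝ) (w : Fin m → ℝ) (t : Fin m) :
    ins p x w (p.succAbove t) = w t := by
  rcases lt_or_ge t.castSucc p with hc | hc
  · rw [Fin.succAbove_of_castSucc_lt _ _ hc]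
    have hv : (t.castSucc : ℕ) < (p:ℕ) := hc
    simp only [ins, Fin.coe_castSucc] at *
    rw [dif_pos hv]
  · rw [Fin.succAbove_of_le_castSucc _ _ hc]
    have hv : (p:ℕ) ≤ (t:ℕ) := hc
    have h1 : ¬ ((t.succ : ℕ) < (p:ℕ)) := by simp [Fin.val_succ]; omega
    have h2 : ¬ ((t.succ : ℕ) = (p:ℕ)) := by simp [Fin.val_succ]; omega
    simp only [ins, dif_neg h1, dif_neg h2]
    exact congrArg w (Fin.ext (by simp [Fin.val_succ]))

/-- `ins p x` as an affine map. -/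
noncomputable def insA {m : ℕ} (p : Fin (m+1)) (x : ℝ) :
    (Fin m → ℝ) →ᵃ[ℝ] (Fin (m+1) → ℝ) where
  toFun := ins p x
  linear :=
    { toFun := ins p 0
      map_add' := by
        intro u v; funext j
        simp only [ins, Pi.add_apply]
        split_ifs <;> simp
      map_smul' := by
        intro c u; funext j
        simp only [ins, Pi.smul_apply, smul_eq_mul, RingHom.id_apply]
        split_ifs <;> simp }
  map_vadd' := by
    intro w u; funext j
    simp only [ins, LinearMap.coe_mk, AddHom.coe_mk, vadd_eq_add, Pi.add_apply]
    split_ifs <;> simp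

/-- Inserting the top value `m+1` into a permutation of `(1, ..., m)` gives a
permutation of `(1, ..., m+1)`. -/
lemma ins_vertex {m : ℕ} (p : Fin (m+1)) (σ : Equiv.Perm (Fin m)) :
    ins p ((m:ℝ)+1) (fun i => ((σ i : ℕ) : ℝ) + 1) ∈ pverts (m+1) := by
  refine ⟨(finSuccEquiv' p).trans ((Equiv.optionCongr σ).trans
    (finSuccEquiv' (Fin.last m)).symm), ?_⟩
  funext j
  by_cases hj : j = p
  · subst hj
    rw [ins_apply_same]
    simp [finSuccEquiv'_at, finSuccEquiv'_symm_none]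
  · obtain ⟨t, rfl⟩ := Fin.exists_succAbove_eq hj
    rw [ins_succAbove]
    simp [finSuccEquiv'_succAbove, Fin.succAbove_last]

lemma ins_mem {m : ℕ} (p : Fin (m+1)) {w : Fin m → ℝ} (hw : w ∈ permsHull m) :
    ins p ((m:ℝ)+1) w ∈ permsHull (m+1) := by
  have h1 : ins p ((m:ℝ)+1) w ∈ (insA p ((m:ℝ)+1)) '' (convexHull ℝ (pverts m)) :=
    ⟨w, hw, rfl⟩
  rw [AffineMap.image_convexHull] at h1
  rw [permsHull_eq]
  refine convexHull_mono ?_ h1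
  rintro _ ⟨v, ⟨σ, rfl⟩, rfl⟩
  exact ins_vertex p σ

set_option maxHeartbeats 800000 in
/-- The key convex-combination identity: the target vector for `(k+1, j+1)` is a convex
combination of the insertions of the target vectors for `(k, j+1)` and `(k+1, j)`. -/
lemma key_eq (k j : ℕ) :
    tgt (k+1) (j+1) (k+j+1+1) =
      (((k:ℝ)+1)/((k:ℝ)+(j:ℝ)+2)) •
          ins (⟨k, by omega⟩ : Fin (k+j+1+1)) (((k+j+1 : ℕ):ℝ)+1) (tgt k (j+1) (k+j+1))
        + (((j:ℝ)+1)/((k:ℝ)+(j:ℝ)+2)) •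
          ins (Fin.last (k+j+1)) (((k+j+1 : ℕ):ℝ)+1) (tgt (k+1) j (k+j+1)) := by
  funext i
  have hi : (i:ℕ) < k + j + 1 + 1 := i.isLt
  have h1 : ((k:ℝ)+1)+1 ≠ 0 := by positivity
  have h2 : ((j:ℝ)+1)+1 ≠ 0 := by positivity
  have h3 : (k:ℝ)+(j:ℝ)+2 ≠ 0 := by positivity
  simp only [Pi.add_apply, Pi.smul_apply, smul_eq_mul]
  show tgtval (k+1) (j+1) (i:ℕ) = _
  rcases Nat.lt_or_ge (i:ℕ) k with hc | hc
  · -- i < k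
    rw [tgtval_lt _ (show (i:ℕ) < k+1 by omega),
      ins_tgt_lt k (j+1) _ (show (i:ℕ) < k from hc),
      ins_tgt_lt (k+1) j _ (show (i:ℕ) < k+j+1 by omega),
      tgtval_lt _ (show (i:ℕ) < k from hc),
      tgtval_lt _ (show (i:ℕ) < k+1 by omega)]
    push_cast
    field_simp
    ring
  rcases Nat.eq_or_lt_of_le hc with hc2 | hc2
  · -- i = k
    rw [tgtval_lt _ (show (i:ℕ) < k+1 by omega),
      ins_apply_eq _ _ (show (i:ℕ) = k from hc2.symm),
      ins_tgt_lt (k+1) j _ (show (i:ℕ) < k+j+1 by omega),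
      tgtval_lt _ (show (i:ℕ) < k+1 by omega)]
    have hik : ((i:ℕ):ℝ) = (k:ℝ) := by exact_mod_cast congrArg (Nat.cast : ℕ → ℝ) hc2.symm
    rw [hik]
    push_cast
    field_simp
    ring
  -- now k < i
  have hv : (((i:ℕ) - 1 : ℕ):ℝ) = ((i:ℕ):ℝ) - 1 := by
    rw [Nat.cast_sub (by omega), Nat.cast_one]
  rcases Nat.lt_or_ge (i:ℕ) (k+j+1) with hc3 | hc3
  · -- k < i < k+j+1
    rw [tgtval_ge _ (show k+1 ≤ (i:ℕ) by omega),
      ins_tgt_gt k (j+1) _ (show k < (i:ℕ) from hc2),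
      ins_tgt_lt (k+1) j _ (show (i:ℕ) < k+j+1 from hc3),
      tgtval_ge _ (show k ≤ (i:ℕ) - 1 by omega),
      tgtval_ge _ (show k+1 ≤ (i:ℕ) by omega),
      hv]
    push_cast
    field_simp
    ring
  · -- i = k+j+1
    have hc4 : (i:ℕ) = k+j+1 := by omega
    rw [tgtval_ge _ (show k+1 ≤ (i:ℕ) by omega),
      ins_tgt_gt k (j+1) _ (show k < (i:ℕ) from hc2),
      ins_apply_eq _ _ (show (i:ℕ) = k+j+1 from hc4),
      tgtval_ge _ (show k ≤ (i:ℕ) - 1 by omega),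
      hv]
    have hik : ((i:ℕ):ℝ) = (k:ℝ)+(j:ℝ)+1 := by
      rw [hc4]; push_cast; ring
    rw [hik]
    push_cast
    field_simp
    ring

lemma tgt_id {n : ℕ} (l l' : ℕ) (hid : ∀ i : Fin n, tgt l l' n i = (i:ℝ) + 1) :
    tgt l l' n ∈ permsHull n := by
  apply subset_convexHull ℝ _
  exact ⟨1, funext fun i => by simpa using hid i⟩

lemma tgt_mem : ∀ n l l' : ℕ, l + l' = n → tgt l l' n ∈ permsHull n := by
  intro n
  induction n with
  | zero =>
    intro l l' _
    apply subset_convexHull ℝ _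
    exact ⟨1, funext fun i => i.elim0⟩
  | succ n IH =>
    intro l l' h
    rcases Nat.eq_zero_or_pos l with hl | hl
    · subst hl
      refine tgt_id 0 l' (fun i => ?_)
      have hl' : l' = n + 1 := by omega
      rw [show tgt 0 l' (n+1) i = tgtval 0 l' (i:ℕ) from rfl,
        tgtval_ge _ (Nat.zero_le _)]
      subst hl'
      have h2 : ((n:ℝ) + 1) + 1 ≠ 0 := by positivity
      push_cast
      field_simp
      ring
    rcases Nat.eq_zero_or_pos l' with hl' | hl'
    · subst hl'
      refine tgt_id l 0 (fun i => ?_)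
      have hlv : l = n + 1 := by omega
      rw [show tgt l 0 (n+1) i = tgtval l 0 (i:ℕ) from rfl,
        tgtval_lt _ (show (i:ℕ) < l by have := i.isLt; omega)]
      subst hlv
      have h2 : ((n:ℝ) + 1) + 1 ≠ 0 := by positivity
      push_cast
      field_simp
      ring
    -- main case: both l, l' ≥ 1
    obtain ⟨k, rfl⟩ : ∃ k, l = k + 1 := ⟨l - 1, by omega⟩
    obtain ⟨j, rfl⟩ : ∃ j, l' = j + 1 := ⟨l' - 1, by omega⟩
    obtain rfl : n = k + j + 1 := by omega
    have ha : ins (⟨k, by omega⟩ : Fin (k+j+1+1)) (((k+j+1 : ℕ):ℝ)+1) (tgt k (j+1) (k+j+1))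
        ∈ permsHull (k+j+1+1) := ins_mem _ (IH k (j+1) (by omega))
    have hb : ins (Fin.last (k+j+1)) (((k+j+1 : ℕ):ℝ)+1) (tgt (k+1) j (k+j+1))
        ∈ permsHull (k+j+1+1) := ins_mem _ (IH (k+1) j (by omega))
    have hden : (0:ℝ) < (k:ℝ) + (j:ℝ) + 2 := by positivity
    have hab : ((k:ℝ)+1)/((k:ℝ)+(j:ℝ)+2) + ((j:ℝ)+1)/((k:ℝ)+(j:ℝ)+2) = 1 := by
      rw [← add_div, div_eq_one_iff_eq (ne_of_gt hden)]
      ring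
    rw [key_eq k j]
    exact (convex_convexHull ℝ _) ha hb (by positivity) (by positivity) hab

/-- for nonnegative integers ℓ, ℓ' with ℓ + ℓ' ≥ 1, the vector
(ℓ+ℓ'+1)·(1/(ℓ+1), ..., ℓ/(ℓ+1), 1/(ℓ'+1), ..., ℓ'/(ℓ'+1)) lies in 𝒜_{ℓ+ℓ'}. -/
theorem stmt_13 (l l' : ℕ) (h : 1 ≤ l + l') :
    (fun i : Fin (l + l') =>
        ((l : ℝ) + (l' : ℝ) + 1) *
          (if (i : ℕ) < l then ((i : ℕ) + 1 : ℝ) / ((l : ℝ) + 1)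
           else (((i : ℕ) - l + 1 : ℕ) : ℝ) / ((l' : ℝ) + 1)))
      ∈ permsHull (l + l') := by
  exact tgt_mem (l + l') l l' rfl
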